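/- For any binary DAG D with n vertices and a unique sink reachable from all vertices, the optimal worst-case number of queries opt for the Regression Search Problem satisfies ⌈log₂ n⌉ ≤ opt ≤ ⌈log_φ n⌉, where φ is the golden ratio. -/

import Mathlib

/-- A strategy is a binary decision tree: internal nodes are queried vertices,
leaves identify the faulty vertex. -/
inductive Strategy (V : Type) : Type where
  | leaf : V → Strategy V
  | node : V → Strategy V → Strategy V → Strategy V

namespace Strategy

/-- The worst-case number of queries of a strategy is the height of the tree. -/
def height {V : Type} : Strategy V → ℕ
  | leaf _ => 0
  | node _ l r => 1 + max l.height r.height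

open Classical in
/-- Running a strategy: `anc u v` means `u` is an ancestor of `v` (including `u = v`).
A query of `q` answers "bugged" (left subtree) iff the faulty vertex `f` is an ancestor
of `q`, and "clean" (right subtree) otherwise. The result is the vertex identified at
the reached leaf. -/
noncomputable def run {V : Type} (anc : V → V → Prop) : Strategy V → V → V
  | leaf v, _ => v
  | node q l r, f => if anc f q then run anc l f else run anc r f

end Strategy


/-- The golden ratio. -/
noncomputable def phi : ℝ := (1 + Real.sqrt 5) / 2

section RSPAux

open Classical

/-- The set of leaf labels of a strategy. -/
private noncomputable def Strategy.leafSet {V : Type} : Strategy V → Finset V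
  | .leaf v => {v}
  | .node _ l r => l.leafSet ∪ r.leafSet

private lemma Strategy.run_mem_leafSet {V : Type} (anc : V → V → Prop) :
    ∀ (s : Strategy V) (f : V), s.run anc f ∈ s.leafSet := by
  intro s
  induction s with
  | leaf v => intro f; simp [Strategy.run, Strategy.leafSet]
  | node q l r ihl ihr =>
    intro f
    simp only [Strategy.run, Strategy.leafSet]
    split_ifs with hf
    · exact Finset.mem_union_left _ (ihl f)
    · exact Finset.mem_union_right _ (ihr f)

private lemma Strategy.leafSet_card_le {V : Type} :
    ∀ s : Strategy V, s.leafSet.card ≤ 2 ^ s.height := by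
  intro s
  induction s with
  | leaf v => simp [Strategy.leafSet, Strategy.height]
  | node q l r ihl ihr =>
    simp only [Strategy.leafSet, Strategy.height]
    have h1 : (l.leafSet ∪ r.leafSet).card ≤ l.leafSet.card + r.leafSet.card :=
      Finset.card_union_le _ _
    have h2 : (2:ℕ) ^ l.height ≤ 2 ^ max l.height r.height :=
      Nat.pow_le_pow_right (by norm_num) (le_max_left _ _)
    have h3 : (2:ℕ) ^ r.height ≤ 2 ^ max l.height r.height :=
      Nat.pow_le_pow_right (by norm_num) (le_max_right _ _)
    have h4 : (2:ℕ) ^ (1 + max l.height r.height) = 2 * 2 ^ max l.height r.height := by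
      rw [pow_add]; ring
    omega

end RSPAux

section RSPUpper

open Classical Finset

variable {V : Type} [Fintype V]

private lemma rsp_not_R_back (E : V → V → Prop) (hacyc : ∀ v : V, ¬ Relation.TransGen E v v)
    {u v : V} (hE : E u v) (h : Relation.ReflTransGen E v u) : False := by
  rcases Relation.reflTransGen_iff_eq_or_transGen.mp h with heq | htg
  · exact hacyc v (Relation.TransGen.single (heq ▸ hE))
  · exact hacyc v (htg.tail hE)

/-- The heavy-path descent: starting from a vertex whose ancestor-within-`S` count
exceeds `fib (h+1)`, we find either a query in the window `[fib h, fib (h+1)]`,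
or a "case B" pair. -/
private lemma rsp_descend (E : V → V → Prop) (hacyc : ∀ v : V, ¬ Relation.TransGen E v v)
    (hbin : ∀ v : V, {u | E u v}.ncard ≤ 2) (S : Finset V) (t : V)
    (hconv : ∀ a ∈ S, ∀ c ∈ S, ∀ b : V,
      Relation.ReflTransGen E a b → Relation.ReflTransGen E b c → b ∈ S)
    (h : ℕ) (hh : 1 ≤ h) :
    ∀ (k : ℕ) (v : V), v ∈ S → Relation.ReflTransGen E v t →
      Nat.fib (h + 1) < (S.filter fun x => Relation.ReflTransGen E x v).card →
      (S.filter fun x => Relation.ReflTransGen E x v).card ≤ k →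
      ∃ q ∈ S, Relation.ReflTransGen E q t ∧
        ((Nat.fib h ≤ (S.filter fun x => Relation.ReflTransGen E x q).card ∧
            (S.filter fun x => Relation.ReflTransGen E x q).card ≤ Nat.fib (h + 1)) ∨
          (Nat.fib (h + 1) < (S.filter fun x => Relation.ReflTransGen E x q).card ∧
            ∃ u : V, E u q ∧
              (S.filter fun x => Relation.ReflTransGen E x u).card + 1 ≤ Nat.fib h ∧
              (S.filter fun x => Relation.ReflTransGen E x q).card ≤
                1 + 2 * (S.filter fun x => Relation.ReflTransGen E x u).card ∧
              (S.filter fun x =>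
                Relation.ReflTransGen E x q ∧ ¬ Relation.ReflTransGen E x u).card ≤ Nat.fib h)) := by
  intro k
  induction k with
  | zero => intro v _ _ hbig hle; omega
  | succ k IH =>
    intro v hvS hvt hbig hle
    set I : Finset V := Finset.univ.filter (fun u => E u v) with hI
    have hIcard : I.card ≤ 2 := by
      have h2 := hbin v
      have h3 : {u | E u v}.ncard = I.card := by
        rw [Set.ncard_eq_toFinset_card']
        congr 1
        ext x; simp [hI]
      omega
    have hcover : (S.filter fun x => Relation.ReflTransGen E x v) ⊆
        insert v (I.biUnion fun u => S.filter fun x => Relation.ReflTransGen E x u) := by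
      intro x hx
      obtain ⟨hxS, hxv⟩ := Finset.mem_filter.mp hx
      rcases hxv.cases_tail with heq | ⟨c, hxc, hcv⟩
      · subst heq; exact Finset.mem_insert_self _ _
      · exact Finset.mem_insert_of_mem (Finset.mem_biUnion.mpr
          ⟨c, by simp [hI, hcv], Finset.mem_filter.mpr ⟨hxS, hxc⟩⟩)
    have hIne : I.Nonempty := by
      by_contra hne
      rw [Finset.not_nonempty_iff_eq_empty] at hne
      have h1 := Finset.card_le_card hcover
      rw [hne] at h1
      simp only [Finset.biUnion_empty] at h1
      have h2 : 0 < Nat.fib (h + 1) := Nat.fib_pos.mpr (by omega)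
      have h3 : (insert v (∅ : Finset V)).card ≤ (∅ : Finset V).card + 1 :=
        Finset.card_insert_le _ _
      simp only [Finset.card_empty] at h3
      omega
    obtain ⟨u1, hu1I, hu1max⟩ := Finset.exists_max_image I
      (fun u => (S.filter fun x => Relation.ReflTransGen E x u).card) hIne
    have hEu1 : E u1 v := by
      have := hu1I; rw [hI, Finset.mem_filter] at this; exact this.2
    have hsum : (S.filter fun x => Relation.ReflTransGen E x v).card ≤
        1 + 2 * (S.filter fun x => Relation.ReflTransGen E x u1).card := by
      have h1 := Finset.card_le_card hcover
      have h2 := Finset.card_insert_le v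
        (I.biUnion fun u => S.filter fun x => Relation.ReflTransGen E x u)
      have h3 := Finset.card_biUnion_le
        (s := I) (t := fun u => S.filter fun x => Relation.ReflTransGen E x u)
      have h4 : (∑ u ∈ I, (S.filter fun x => Relation.ReflTransGen E x u).card) ≤
          I.card * (S.filter fun x => Relation.ReflTransGen E x u1).card := by
        have := Finset.sum_le_card_nsmul I
          (fun u => (S.filter fun x => Relation.ReflTransGen E x u).card)
          ((S.filter fun x => Relation.ReflTransGen E x u1).card) hu1max
        simpa using this
      have h5 : I.card * (S.filter fun x => Relation.ReflTransGen E x u1).card ≤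
          2 * (S.filter fun x => Relation.ReflTransGen E x u1).card :=
        Nat.mul_le_mul_right _ hIcard
      omega
    have hmono : (S.filter fun x => Relation.ReflTransGen E x u1) ⊆
        (S.filter fun x => Relation.ReflTransGen E x v) := by
      intro x hx
      obtain ⟨h1, h2⟩ := Finset.mem_filter.mp hx
      exact Finset.mem_filter.mpr ⟨h1, h2.tail hEu1⟩
    have hlt : (S.filter fun x => Relation.ReflTransGen E x u1).card <
        (S.filter fun x => Relation.ReflTransGen E x v).card := by
      apply Finset.card_lt_card
      rw [Finset.ssubset_iff_of_subset hmono]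
      refine ⟨v, Finset.mem_filter.mpr ⟨hvS, .refl⟩, fun hmem => ?_⟩
      exact rsp_not_R_back E hacyc hEu1 (Finset.mem_filter.mp hmem).2
    rcases lt_or_ge (Nat.fib (h + 1))
        ((S.filter fun x => Relation.ReflTransGen E x u1).card) with hgt | hle1
    · -- recurse along the heavy in-neighbor
      have hu1S : u1 ∈ S := by
        have hpos : 0 < (S.filter fun x => Relation.ReflTransGen E x u1).card :=
          lt_of_le_of_lt (Nat.zero_le _) hgt
        obtain ⟨w, hw⟩ := Finset.card_pos.mp hpos
        obtain ⟨hwS, hwu1⟩ := Finset.mem_filter.mp hw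
        exact hconv w hwS v hvS u1 hwu1 (.single hEu1)
      exact IH u1 hu1S ((Relation.ReflTransGen.single hEu1).trans hvt) hgt (by omega)
    · rcases le_or_gt (Nat.fib h)
          ((S.filter fun x => Relation.ReflTransGen E x u1).card) with hge | hlt2
      · -- case A with q := u1
        have hu1S : u1 ∈ S := by
          have hpos : 0 < (S.filter fun x => Relation.ReflTransGen E x u1).card :=
            lt_of_lt_of_le (Nat.fib_pos.mpr (by omega)) hge
          obtain ⟨w, hw⟩ := Finset.card_pos.mp hpos
          obtain ⟨hwS, hwu1⟩ := Finset.mem_filter.mp hw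
          exact hconv w hwS v hvS u1 hwu1 (.single hEu1)
        exact ⟨u1, hu1S, (Relation.ReflTransGen.single hEu1).trans hvt, Or.inl ⟨hge, hle1⟩⟩
      · -- case B with q := v, u := u1
        have hcov2 : (S.filter fun x =>
              Relation.ReflTransGen E x v ∧ ¬ Relation.ReflTransGen E x u1) ⊆
            insert v ((I.erase u1).biUnion fun u =>
              S.filter fun x => Relation.ReflTransGen E x u) := by
          intro x hx
          obtain ⟨hxS, hxv, hxnu⟩ := Finset.mem_filter.mp hx
          rcases hxv.cases_tail with heq | ⟨c, hxc, hcv⟩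
          · subst heq; exact Finset.mem_insert_self _ _
          · refine Finset.mem_insert_of_mem (Finset.mem_biUnion.mpr
              ⟨c, ?_, Finset.mem_filter.mpr ⟨hxS, hxc⟩⟩)
            refine Finset.mem_erase.mpr ⟨?_, by simp [hI, hcv]⟩
            rintro rfl; exact hxnu hxc
        have hcard2 : (S.filter fun x =>
              Relation.ReflTransGen E x v ∧ ¬ Relation.ReflTransGen E x u1).card ≤
            1 + (S.filter fun x => Relation.ReflTransGen E x u1).card := by
          have h1 := Finset.card_le_card hcov2
          have h2 := Finset.card_insert_le v
            ((I.erase u1).biUnion fun u => S.filter fun x => Relation.ReflTransGen E x u)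
          have h3 := Finset.card_biUnion_le
            (s := I.erase u1) (t := fun u => S.filter fun x => Relation.ReflTransGen E x u)
          have h4 : (∑ u ∈ I.erase u1, (S.filter fun x => Relation.ReflTransGen E x u).card) ≤
              (I.erase u1).card * (S.filter fun x => Relation.ReflTransGen E x u1).card := by
            have := Finset.sum_le_card_nsmul (I.erase u1)
              (fun u => (S.filter fun x => Relation.ReflTransGen E x u).card)
              ((S.filter fun x => Relation.ReflTransGen E x u1).card)
              (fun x hx => hu1max x (Finset.mem_of_mem_erase hx))
            simpa using this
          have h5 : (I.erase u1).card ≤ 1 := by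
            have := Finset.card_erase_of_mem hu1I
            omega
          have h6 : (I.erase u1).card * (S.filter fun x => Relation.ReflTransGen E x u1).card ≤
              1 * (S.filter fun x => Relation.ReflTransGen E x u1).card :=
            Nat.mul_le_mul_right _ h5
          omega
        exact ⟨v, hvS, hvt, Or.inr ⟨hbig, u1, hEu1, by omega, hsum, by omega⟩⟩

private lemma rsp_main (E : V → V → Prop) (hacyc : ∀ v : V, ¬ Relation.TransGen E v v)
    (hbin : ∀ v : V, {u | E u v}.ncard ≤ 2) :
    ∀ (h : ℕ) (S : Finset V) (t : V),
      (∀ v ∈ S, t ∈ S) →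
      (∀ v ∈ S, Relation.ReflTransGen E v t) →
      (∀ a ∈ S, ∀ c ∈ S, ∀ b : V,
        Relation.ReflTransGen E a b → Relation.ReflTransGen E b c → b ∈ S) →
      S.card ≤ Nat.fib (h + 2) →
      ∃ s : Strategy V, s.height ≤ h ∧
        ∀ f ∈ S, s.run (fun u w => Relation.ReflTransGen E u w) f = f := by
  intro h
  induction h using Nat.strong_induction_on with
  | _ h IH =>
  intro S t hts hreach hconv hcard
  by_cases h1 : S.card ≤ 1
  · refine ⟨Strategy.leaf t, by simp [Strategy.height], ?_⟩
    intro f hf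
    have hft : f = t := by
      by_contra hne
      exact absurd (Finset.one_lt_card.mpr ⟨f, hf, t, hts f hf, hne⟩) (by omega)
    simp [Strategy.run, hft]
  · push_neg at h1
    have hh : 1 ≤ h := by
      by_contra hch
      push_neg at hch
      interval_cases h
      · simp [Nat.fib] at hcard; omega
    obtain ⟨h₁, rfl⟩ : ∃ h₁, h = h₁ + 1 := ⟨h - 1, by omega⟩
    by_cases hsmall : S.card ≤ Nat.fib (h₁ + 2)
    · obtain ⟨s, hs1, hs2⟩ := IH h₁ (by omega) S t hts hreach hconv hsmall
      exact ⟨s, by omega, hs2⟩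
    · push_neg at hsmall
      have htS : t ∈ S := by
        obtain ⟨x, hx⟩ := Finset.card_pos.mp (show 0 < S.card by omega)
        exact hts x hx
      have hAt : (S.filter fun x => Relation.ReflTransGen E x t) = S :=
        Finset.filter_true_of_mem hreach
      obtain ⟨q, hqS, hqt, hcase⟩ :=
        rsp_descend E hacyc hbin S t hconv (h₁ + 1) (by omega) S.card t htS .refl
          (by rw [hAt]; exact hsmall) (by rw [hAt])
      have hfib3 : Nat.fib (h₁ + 1 + 2) = Nat.fib (h₁ + 1) + Nat.fib (h₁ + 2) :=
        Nat.fib_add_two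
      rcases hcase with ⟨hw1, hw2⟩ | ⟨hbigq, u, hEuq, hAu, hAq2, hSyn⟩
      -- CASE A: a query in the window [fib (h₁+1), fib (h₁+2)]
      · have hsplit := Finset.card_filter_add_card_filter_not
          (s := S) (p := fun x => Relation.ReflTransGen E x q)
        obtain ⟨sy, hsy1, hsy2⟩ := IH h₁ (by omega)
          (S.filter fun x => Relation.ReflTransGen E x q) q
          (fun x hx => Finset.mem_filter.mpr ⟨hqS, .refl⟩)
          (fun x hx => (Finset.mem_filter.mp hx).2)
          (by
            intro a ha c hc b hab hbc
            obtain ⟨haS, haq⟩ := Finset.mem_filter.mp ha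
            obtain ⟨hcS, hcq⟩ := Finset.mem_filter.mp hc
            exact Finset.mem_filter.mpr ⟨hconv a haS c hcS b hab hbc, hbc.trans hcq⟩)
          hw2
        obtain ⟨sn, hsn1, hsn2⟩ := IH h₁ (by omega)
          (S.filter fun x => ¬ Relation.ReflTransGen E x q) t
          (by
            intro x hx
            obtain ⟨hxS, hxq⟩ := Finset.mem_filter.mp hx
            exact Finset.mem_filter.mpr ⟨htS, fun htq => hxq ((hreach x hxS).trans htq)⟩)
          (fun x hx => hreach x (Finset.mem_filter.mp hx).1)
          (by
            intro a ha c hc b hab hbc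
            obtain ⟨haS, haq⟩ := Finset.mem_filter.mp ha
            obtain ⟨hcS, hcq⟩ := Finset.mem_filter.mp hc
            exact Finset.mem_filter.mpr
              ⟨hconv a haS c hcS b hab hbc, fun hbq => haq (hab.trans hbq)⟩)
          (by omega)
        refine ⟨Strategy.node q sy sn, ?_, ?_⟩
        · simp only [Strategy.height]; omega
        · intro f hf
          simp only [Strategy.run]
          split_ifs with hfq
          · exact hsy2 f (Finset.mem_filter.mpr ⟨hf, hfq⟩)
          · exact hsn2 f (Finset.mem_filter.mpr ⟨hf, hfq⟩)
      -- CASE B: double query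
      · cases h₁ with
        | zero =>
          exfalso
          have e1 : Nat.fib (0 + 1) = 1 := by norm_num
          have e2 : Nat.fib (0 + 1 + 1) = 1 := by norm_num
          omega
        | succ h₂ =>
          have hfib4 : Nat.fib (h₂ + 1 + 2) = Nat.fib (h₂ + 1) + Nat.fib (h₂ + 2) :=
            Nat.fib_add_two
          have e1 : Nat.fib (h₂ + 1 + 1) = Nat.fib (h₂ + 2) := rfl
          have e2 : Nat.fib (h₂ + 1 + 1 + 1) = Nat.fib (h₂ + 1 + 2) := rfl
                    -- yes-yes branch: ancestors of u
          obtain ⟨syy, hsyy1, hsyy2⟩ := IH h₂ (by omega)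
            (S.filter fun x => Relation.ReflTransGen E x q ∧ Relation.ReflTransGen E x u) u
            (by
              intro x hx
              obtain ⟨hxS, hxq, hxu⟩ := Finset.mem_filter.mp hx
              have huS : u ∈ S := hconv x hxS q hqS u hxu (.single hEuq)
              exact Finset.mem_filter.mpr ⟨huS, .single hEuq, .refl⟩)
            (fun x hx => (Finset.mem_filter.mp hx).2.2)
            (by
              intro a ha c hc b hab hbc
              obtain ⟨haS, haq, hau⟩ := Finset.mem_filter.mp ha
              obtain ⟨hcS, hcq, hcu⟩ := Finset.mem_filter.mp hc
              exact Finset.mem_filter.mpr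
                ⟨hconv a haS c hcS b hab hbc, hbc.trans hcq, hbc.trans hcu⟩)
            (by
              have hsub : (S.filter fun x =>
                    Relation.ReflTransGen E x q ∧ Relation.ReflTransGen E x u) ⊆
                  (S.filter fun x => Relation.ReflTransGen E x u) := by
                intro x hx
                obtain ⟨hxS, hxq, hxu⟩ := Finset.mem_filter.mp hx
                exact Finset.mem_filter.mpr ⟨hxS, hxu⟩
              have := Finset.card_le_card hsub
              omega)
          -- yes-no branch
          obtain ⟨syn, hsyn1, hsyn2⟩ := IH h₂ (by omega)
            (S.filter fun x => Relation.ReflTransGen E x q ∧ ¬ Relation.ReflTransGen E x u) q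
            (by
              intro x hx
              exact Finset.mem_filter.mpr
                ⟨hqS, .refl, fun hqu => (rsp_not_R_back E hacyc hEuq hqu).elim⟩)
            (fun x hx => (Finset.mem_filter.mp hx).2.1)
            (by
              intro a ha c hc b hab hbc
              obtain ⟨haS, haq, hau⟩ := Finset.mem_filter.mp ha
              obtain ⟨hcS, hcq, hcu⟩ := Finset.mem_filter.mp hc
              exact Finset.mem_filter.mpr
                ⟨hconv a haS c hcS b hab hbc, hbc.trans hcq,
                  fun hbu => hau (hab.trans hbu)⟩)
            hSyn
          -- no branch
          have hsplit : (S.filter fun x => Relation.ReflTransGen E x q).card +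
              (S.filter fun x => ¬ Relation.ReflTransGen E x q).card = S.card :=
            Finset.card_filter_add_card_filter_not _
          obtain ⟨sn, hsn1, hsn2⟩ := IH (h₂ + 1) (by omega)
            (S.filter fun x => ¬ Relation.ReflTransGen E x q) t
            (by
              intro x hx
              obtain ⟨hxS, hxq⟩ := Finset.mem_filter.mp hx
              exact Finset.mem_filter.mpr ⟨htS, fun htq => hxq ((hreach x hxS).trans htq)⟩)
            (fun x hx => hreach x (Finset.mem_filter.mp hx).1)
            (by
              intro a ha c hc b hab hbc
              obtain ⟨haS, haq⟩ := Finset.mem_filter.mp ha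
              obtain ⟨hcS, hcq⟩ := Finset.mem_filter.mp hc
              exact Finset.mem_filter.mpr
                ⟨hconv a haS c hcS b hab hbc, fun hbq => haq (hab.trans hbq)⟩)
            (by omega)
          refine ⟨Strategy.node q (Strategy.node u syy syn) sn, ?_, ?_⟩
          · simp only [Strategy.height]; omega
          · intro f hf
            simp only [Strategy.run]
            split_ifs with hfq hfu
            · exact hsyy2 f (Finset.mem_filter.mpr ⟨hf, hfq, hfu⟩)
            · exact hsyn2 f (Finset.mem_filter.mpr ⟨hf, hfq, hfu⟩)
            · exact hsn2 f (Finset.mem_filter.mpr ⟨hf, hfq⟩)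

end RSPUpper

private lemma rsp_sqrt5_sq : Real.sqrt 5 ^ 2 = 5 := Real.sq_sqrt (by norm_num)

private lemma rsp_phi_gt_one : 1 < phi := by
  have h1 := rsp_sqrt5_sq
  have h2 : 0 ≤ Real.sqrt 5 := Real.sqrt_nonneg 5
  unfold phi
  nlinarith

private lemma rsp_phi_sq : phi ^ 2 = phi + 1 := by
  have h1 := rsp_sqrt5_sq
  unfold phi
  nlinarith

private lemma rsp_phi_pow_le_fib : ∀ h : ℕ, phi ^ h ≤ (Nat.fib (h + 2) : ℝ) := by
  intro h
  induction h using Nat.strong_induction_on with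
  | _ h IH =>
  match h with
  | 0 => simp
  | 1 =>
    have h1 := rsp_sqrt5_sq
    have h2 : 0 ≤ Real.sqrt 5 := Real.sqrt_nonneg 5
    have h3 : (Nat.fib 3 : ℝ) = 2 := by norm_num [Nat.fib]
    rw [pow_one, h3]
    unfold phi
    nlinarith
  | (n + 2) =>
    have ih1 := IH n (by omega)
    have ih2 := IH (n + 1) (by omega)
    have hpos : (0:ℝ) < phi := lt_trans one_pos rsp_phi_gt_one
    have hpow : phi ^ (n + 2) = phi ^ (n + 1) + phi ^ n := by
      have : phi ^ (n + 2) = phi ^ n * phi ^ 2 := by ring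
      rw [this, rsp_phi_sq]
      ring
    have hfib : Nat.fib (n + 2 + 2) = Nat.fib (n + 2) + Nat.fib (n + 3) := Nat.fib_add_two
    rw [hpow, hfib]
    push_cast
    have e1 : Nat.fib (n + 1 + 2) = Nat.fib (n + 3) := rfl
    rw [e1] at ih2
    linarith

/-- For any binary DAG with `n` vertices and a unique sink reachable from all vertices,
the optimal worst-case number of queries `opt` for the Regression Search Problem
satisfies `⌈log₂ n⌉ ≤ opt ≤ ⌈log_φ n⌉`: every correct strategy uses at least `⌈log₂ n⌉`
queries and some correct strategy uses at most `⌈log_φ n⌉` queries. -/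
theorem rsp_binary_opt_bounds {V : Type} [Fintype V] [Nonempty V] (E : V → V → Prop)
    (hacyc : ∀ v : V, ¬ Relation.TransGen E v v)
    (hbin : ∀ v : V, {u | E u v}.ncard ≤ 2)
    (b : V) (hb : ∀ v : V, Relation.ReflTransGen E v b) :
    (∀ s : Strategy V, (∀ f : V, s.run (fun u w => Relation.ReflTransGen E u w) f = f) →
      Nat.clog 2 (Fintype.card V) ≤ s.height) ∧
    (∃ s : Strategy V, (∀ f : V, s.run (fun u w => Relation.ReflTransGen E u w) f = f) ∧
      s.height ≤ ⌈Real.logb phi (Fintype.card V)⌉₊) := by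
  constructor
  · intro s hs
    have hsub : (Finset.univ : Finset V) ⊆ s.leafSet := by
      intro f _
      have := Strategy.run_mem_leafSet (fun u w => Relation.ReflTransGen E u w) s f
      rwa [hs f] at this
    have h1 : Fintype.card V ≤ 2 ^ s.height := by
      calc Fintype.card V = (Finset.univ : Finset V).card := Finset.card_univ.symm
        _ ≤ s.leafSet.card := Finset.card_le_card hsub
        _ ≤ 2 ^ s.height := Strategy.leafSet_card_le s
    exact (Nat.clog_le_iff_le_pow (by norm_num)).mpr h1
  · set n := Fintype.card V with hn
    have hn1 : 0 < n := Fintype.card_pos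
    set h := ⌈Real.logb phi (n : ℝ)⌉₊ with hh
    have hcardfib : n ≤ Nat.fib (h + 2) := by
      have hb1 : 1 < phi := rsp_phi_gt_one
      have h1 : (n : ℝ) ≤ phi ^ (h : ℕ) := by
        have hlog := Real.rpow_logb (lt_trans one_pos hb1) (ne_of_gt hb1)
          (show (0:ℝ) < (n : ℝ) by exact_mod_cast hn1)
        calc (n:ℝ) = phi ^ (Real.logb phi (n : ℝ)) := hlog.symm
          _ ≤ phi ^ ((h : ℕ) : ℝ) :=
            Real.rpow_le_rpow_of_exponent_le hb1.le (Nat.le_ceil _)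
          _ = phi ^ (h : ℕ) := Real.rpow_natCast _ _
      have h2 := rsp_phi_pow_le_fib h
      exact_mod_cast h1.trans h2
    obtain ⟨s, hs1, hs2⟩ := rsp_main E hacyc hbin h Finset.univ b
      (fun v _ => Finset.mem_univ b) (fun v _ => hb v)
      (fun a _ c _ b' _ _ => Finset.mem_univ b')
      (by rw [Finset.card_univ]; exact hcardfib)
    exact ⟨s, fun f => hs2 f (Finset.mem_univ f), hs1⟩
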